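/- Let G = (X, Y, E) be a chain graph without isolated vertices and let S = (v_1, ..., v_p) be a Grundy dominating sequence of G containing vertices from both X and Y. If v_1 ∈ Y_1 (the open-twin class of Y whose vertices are adjacent to all of X), then γ_gr(G) = |Y|, and consequently listing the vertices of Y in reverse chain order yields a Grundy dominating sequence contained entirely in Y. -/

import Mathlib

open Finset

variable {V : Type*}

/-- The closed neighborhood of a vertex. -/
def CN (G : SimpleGraph V) (v : V) : Set V := insert v (G.neighborSet v)

/-- A closed neighborhood (legal) sequence: distinct vertices, each footprinting
a vertex not dominated by the closed neighborhoods of earlier vertices. -/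
def IsCNSeq (G : SimpleGraph V) (S : List V) : Prop :=
  S.Nodup ∧ ∀ i : Fin S.length, ∃ u, u ∈ CN G (S.get i) ∧
    ∀ j : Fin S.length, j < i → u ∉ CN G (S.get j)

/-- A dominating sequence: a closed neighborhood sequence whose vertex set dominates. -/
def IsDomSeq (G : SimpleGraph V) (S : List V) : Prop :=
  IsCNSeq G S ∧ ∀ v : V, ∃ u ∈ S, v ∈ CN G u

/-- The Grundy domination number: the maximum length of a dominating sequence. -/
noncomputable def grundyDom (G : SimpleGraph V) : ℕ :=
  sSup {n | ∃ S : List V, IsDomSeq G S ∧ S.length = n}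

lemma mem_CN_iff (G : SimpleGraph V) (v u : V) : u ∈ CN G v ↔ u = v ∨ G.Adj v u := by
  simp [CN, SimpleGraph.mem_neighborSet]

/-- If a Grundy dominating sequence of a chain graph uses vertices from both sides and
its first vertex is adjacent to all of `X` (i.e. lies in `Y_1`), then `γ_gr(G) = |Y|`
and there is a Grundy dominating sequence contained entirely in `Y`. -/
theorem chain_grundy_of_head_in_Y1 {V : Type*} [Fintype V] [DecidableEq V]
    (G : SimpleGraph V) (X Y : Finset V)
    (hXY : Disjoint X Y) (hcover : X ∪ Y = Finset.univ)
    (hXind : ∀ x ∈ X, ∀ x' ∈ X, ¬ G.Adj x x')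
    (hYind : ∀ y ∈ Y, ∀ y' ∈ Y, ¬ G.Adj y y')
    (hchain : ∀ x ∈ X, ∀ x' ∈ X,
      G.neighborSet x ⊆ G.neighborSet x' ∨ G.neighborSet x' ⊆ G.neighborSet x)
    (hiso : ∀ v : V, ∃ u, G.Adj v u)
    (S : List V) (hS : IsDomSeq G S) (hlen : S.length = grundyDom G)
    (hne : S ≠ []) (hbothX : ∃ v ∈ S, v ∈ X) (hbothY : ∃ v ∈ S, v ∈ Y)
    (hheadY : S.head hne ∈ Y) (hhead : ∀ x ∈ X, G.Adj (S.head hne) x) :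
    grundyDom G = Y.card ∧
      ∃ S' : List V, IsDomSeq G S' ∧ S'.length = grundyDom G ∧ ∀ v ∈ S', v ∈ Y := by
  have hpos : 0 < S.length := List.length_pos_iff.2 hne
  have hXorY : ∀ v : V, v ∈ X ∨ v ∈ Y := by
    intro v
    have hv := Finset.mem_univ v
    rw [← hcover, Finset.mem_union] at hv
    exact hv
  have hhead0 : S.get ⟨0, hpos⟩ = S.head hne := by
    cases S with
    | nil => exact absurd rfl hne
    | cons a l => rfl
  -- Upper bound: S.length ≤ Y.card
  have hYle : S.length ≤ Y.card := by
    obtain ⟨⟨hnodup, hleg⟩, _⟩ := hS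
    choose u hu1 hu2 using hleg
    set f : Fin S.length → V := fun i => if i.val = 0 then S.head hne else u i with hf
    have hfY : ∀ i, f i ∈ Y := by
      intro i
      by_cases hi : i.val = 0
      · simp only [hf, hi, if_pos]
        exact hheadY
      · simp only [hf, hi, if_neg, if_false]
        have hlt : (⟨0, hpos⟩ : Fin S.length) < i := by
          exact Nat.pos_of_ne_zero hi
        have hnotin := hu2 i ⟨0, hpos⟩ hlt
        rw [hhead0] at hnotin
        rcases hXorY (u i) with hx | hy
        · exact absurd ((mem_CN_iff G _ _).2 (Or.inr (hhead _ hx))) hnotin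
        · exact hy
    have key : ∀ i j : Fin S.length, j < i → f i ≠ f j := by
      intro i j hji
      have hji' : j.val < i.val := hji
      have hi0 : i.val ≠ 0 := by omega
      by_cases hj : j.val = 0
      · simp only [hf, hi0, hj, if_neg, if_pos, if_false]
        intro heq
        have hlt : (⟨0, hpos⟩ : Fin S.length) < i := by exact Nat.pos_of_ne_zero hi0
        have hnotin := hu2 i ⟨0, hpos⟩ hlt
        rw [hhead0] at hnotin
        exact hnotin (heq ▸ (mem_CN_iff G _ _).2 (Or.inl rfl))
      · simp only [hf, hi0, hj, if_neg, if_false]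
        intro heq
        exact (hu2 i j hji) (heq ▸ hu1 j)
    have hfinj : Function.Injective f := by
      intro i j hij
      rcases lt_trichotomy i j with h | h | h
      · exact absurd hij.symm (key j i h)
      · exact h
      · exact absurd hij (key i j h)
    calc S.length = (Finset.univ : Finset (Fin S.length)).card := by
            simp
      _ ≤ Y.card := Finset.card_le_card_of_injOn f (fun i _ => hfY i) hfinj.injOn
  -- Lower bound: Y.toList is a dominating sequence
  set L : List V := Y.toList with hLdef
  have hLmem : ∀ v, v ∈ L ↔ v ∈ Y := fun v => Finset.mem_toList
  have hLget : ∀ i : Fin L.length, L.get i ∈ Y := fun i => (hLmem _).1 (L.get_mem i)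
  have hLdom : IsDomSeq G L := by
    refine ⟨⟨Y.nodup_toList, ?_⟩, ?_⟩
    · intro i
      refine ⟨L.get i, (mem_CN_iff G _ _).2 (Or.inl rfl), ?_⟩
      intro j hji hmem
      rcases (mem_CN_iff G _ _).1 hmem with heq | hadj
      · exact absurd ((Y.nodup_toList.get_inj_iff).1 heq) (ne_of_gt hji)
      · exact hYind _ (hLget j) _ (hLget i) hadj
    · intro v
      rcases hXorY v with hx | hy
      · obtain ⟨w, hw⟩ := hiso v
        have hwY : w ∈ Y := by
          rcases hXorY w with hwx | hwy
          · exact absurd hw (hXind v hx w hwx)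
          · exact hwy
        exact ⟨w, (hLmem w).2 hwY, (mem_CN_iff G _ _).2 (Or.inr hw.symm)⟩
      · exact ⟨v, (hLmem v).2 hy, (mem_CN_iff G _ _).2 (Or.inl rfl)⟩
  have hbdd : BddAbove {n | ∃ T : List V, IsDomSeq G T ∧ T.length = n} := by
    refine ⟨Fintype.card V, ?_⟩
    rintro n ⟨T, hT, rfl⟩
    exact hT.1.1.length_le_card
  have hge : Y.card ≤ grundyDom G := by
    have : Y.card ∈ {n | ∃ T : List V, IsDomSeq G T ∧ T.length = n} :=
      ⟨L, hLdom, Y.length_toList⟩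
    exact le_csSup hbdd this
  have heq : grundyDom G = Y.card := le_antisymm (by rw [← hlen]; exact hYle) hge
  refine ⟨heq, L, hLdom, ?_, fun v hv => (hLmem v).1 hv⟩
  rw [heq]
  exact Y.length_toList
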